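/- Let q be a length-n word over Q = {A,C,G,T} whose even-bit sequence e(q) and odd-bit sequence o(q) (under the encoding A=00, T=01, C=10, G=11) are each nonzero codewords of a binary cyclic simplex code of length n = 2^m − 1, m ≥ 2. Then for every shift 1 ≤ i ≤ n−1, μ_i(q) ≤ 2^{m−2}, where μ_i(q) is the number of positions ℓ ∈ {1,…,n−i} with q_ℓ equal to the Watson-Crick complement of q_{i+ℓ}. -/

import Mathlib

inductive Base : Type
  | A | C | G | T
deriving DecidableEq

instance : Fintype Base :=
  ⟨{.A, .C, .G, .T}, fun x => by cases x <;> simp⟩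

def Base.compl : Base → Base
  | .A => .T
  | .T => .A
  | .C => .G
  | .G => .C

/-- The even bit of a base under the encoding A=00, T=01, C=10, G=11. -/
def Base.evenBit : Base → Bool
  | .A => false
  | .T => false
  | .C => true
  | .G => true

/-- The odd bit of a base under the encoding A=00, T=01, C=10, G=11. -/
def Base.oddBit : Base → Bool
  | .A => false
  | .T => true
  | .C => false
  | .G => true

/-- A bit as an element of `F_2`. -/
def bitVal (x : Bool) : ZMod 2 := if x then 1 else 0

/-- `μ_i(q)`: the number of indices `ℓ` with `ℓ + i < n` (0-based) such that
`q_ℓ` is the Watson-Crick complement of `q_{ℓ+i}`. -/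
noncomputable def mu (n i : ℕ) (q : Fin n → Base) : ℕ :=
  Set.ncard {ℓ : ℕ | ∃ h : ℓ + i < n, q ⟨ℓ, by omega⟩ = (q ⟨ℓ + i, h⟩).compl}

lemma zmod2_add_eq_zero (x y : ZMod 2) : x + y = 0 ↔ x = y := by revert x y; decide

lemma zmod2_add_eq_one (x y : ZMod 2) :
    x + y = 1 ↔ ((x = 1 ∧ ¬ y = 1) ∨ (y = 1 ∧ ¬ x = 1)) := by revert x y; decide

lemma zmod2_eq_zero (x : ZMod 2) : x = 0 ↔ ¬ x = 1 := by revert x; decide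

lemma base_compl_iff (a b : Base) : a = b.compl ↔
    (bitVal a.evenBit + bitVal b.evenBit = 0 ∧ bitVal a.oddBit + bitVal b.oddBit = 1) := by
  revert a b; decide


/-- If the even-bit and odd-bit sequences of a length-`n = 2^m - 1` DNA word `q` are
nonzero codewords of a binary cyclic simplex code of dimension `m ≥ 2` (the code
consisting of the zero word and the `n` cyclic shifts of a fixed nonzero generator,
linear, with all nonzero codewords of weight `2^(m-1)`), then `μ_i(q) ≤ 2^(m-2)` for
every shift `1 ≤ i ≤ n - 1`. -/
theorem stmt13 (m : ℕ) (hm : 2 ≤ m) (n : ℕ) [NeZero n] (hn : n = 2 ^ m - 1)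
    (gen : Fin n → ZMod 2) (hgen : gen ≠ 0)
    (C : Set (Fin n → ZMod 2))
    (hC : C = {0} ∪ {c | ∃ k : Fin n, c = fun i => gen (i + k)})
    (hcard : C.ncard = 2 ^ m)
    (hadd : ∀ c ∈ C, ∀ c' ∈ C, c + c' ∈ C)
    (hwt : ∀ c ∈ C, c ≠ 0 →
      (Finset.univ.filter (fun i : Fin n => c i = 1)).card = 2 ^ (m - 1))
    (q : Fin n → Base)
    (he : (fun i : Fin n => bitVal (q i).evenBit) ∈ C)
    (he0 : (fun i : Fin n => bitVal (q i).evenBit) ≠ 0)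
    (ho : (fun i : Fin n => bitVal (q i).oddBit) ∈ C)
    (ho0 : (fun i : Fin n => bitVal (q i).oddBit) ≠ 0) :
    ∀ i, 1 ≤ i → i ≤ n - 1 → mu n i q ≤ 2 ^ (m - 2) := by
  have h2m : 4 ≤ 2 ^ m := by
    calc (4:ℕ) = 2 ^ 2 := rfl
      _ ≤ 2 ^ m := Nat.pow_le_pow_right (by norm_num) hm
  have hn3 : 3 ≤ n := by omega
  intro i hi1 hi2
  have hiltn : i < n := by omega
  set iF : Fin n := ⟨i, hiltn⟩ with hiF
  set E : Fin n → ZMod 2 := fun j => bitVal (q j).evenBit with hE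
  set O : Fin n → ZMod 2 := fun j => bitVal (q j).oddBit with hO
  set φ : Fin n → Fin n → ZMod 2 := fun k j => gen (j + k) with hφ
  have hCset : ∀ c, c ∈ C ↔ (c = 0 ∨ ∃ k, c = φ k) := by
    intro c; rw [hC]; simp [hφ]
  have hFC : C = ↑(insert (0 : Fin n → ZMod 2) (Finset.univ.image φ)) := by
    ext c
    simp only [Finset.coe_insert, Set.mem_insert_iff, Finset.coe_image, Finset.coe_univ,
      Set.image_univ, Set.mem_range, hCset]
    constructor
    · rintro (h | ⟨k, h⟩)
      · exact Or.inl h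
      · exact Or.inr ⟨k, h.symm⟩
    · rintro (h | ⟨k, h⟩)
      · exact Or.inl h
      · exact Or.inr ⟨k, h.symm⟩
  have hFcard : (insert (0 : Fin n → ZMod 2) (Finset.univ.image φ)).card = n + 1 := by
    rw [← Set.ncard_coe_finset, ← hFC, hcard]; omega
  have himg : (Finset.univ.image φ).card ≤ n := by
    refine le_trans Finset.card_image_le ?_
    simp
  have h0not : (0 : Fin n → ZMod 2) ∉ Finset.univ.image φ := by
    intro h0
    rw [Finset.card_insert_of_mem h0] at hFcard
    omega
  have hinj : Function.Injective φ := by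
    rw [Finset.card_insert_of_notMem h0not] at hFcard
    have hcc : (Finset.univ.image φ).card = (Finset.univ : Finset (Fin n)).card := by
      rw [Finset.card_univ, Fintype.card_fin]
      omega
    have hio := Finset.card_image_iff.mp hcc
    intro a b hab
    exact hio (by simp) (by simp) hab
  -- main structural claim
  have main : ∀ c, c ∈ C → c ≠ 0 →
      (fun ℓ => c ℓ + c (ℓ + iF)) ∈ C ∧ (fun ℓ => c ℓ + c (ℓ + iF)) ≠ 0 := by
    intro c hc hc0
    rcases (hCset c).mp hc with h | ⟨k, hk⟩
    · exact absurd h hc0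
    have hfun : (fun ℓ => c ℓ + c (ℓ + iF)) = c + φ (k + iF) := by
      funext ℓ
      rw [hk]
      show gen (ℓ + k) + gen ((ℓ + iF) + k) = gen (ℓ + k) + gen (ℓ + (k + iF))
      have harg : (ℓ + iF) + k = ℓ + (k + iF) := by rw [add_assoc, add_comm iF k]
      rw [harg]
    constructor
    · rw [hfun]; exact hadd c hc _ ((hCset _).mpr (Or.inr ⟨_, rfl⟩))
    · rw [hfun]
      intro h0
      have hcφ : c = φ (k + iF) := by
        funext ℓ
        have h1 := congrFun h0 ℓ
        simp only [Pi.add_apply, Pi.zero_apply] at h1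
        exact (zmod2_add_eq_zero _ _).mp h1
      rw [hk] at hcφ
      have hkk := hinj hcφ
      have hiF0 : iF = 0 := left_eq_add.mp hkk
      have : i = 0 := by
        have h := congrArg Fin.val hiF0
        simpa [hiF] using h
      omega
  obtain ⟨hu, hu0⟩ := main E he he0
  obtain ⟨hv, hv0⟩ := main O ho ho0
  set u : Fin n → ZMod 2 := fun ℓ => E ℓ + E (ℓ + iF) with hudef
  set v : Fin n → ZMod 2 := fun ℓ => O ℓ + O (ℓ + iF) with hvdef
  set S : Finset (Fin n) := Finset.univ.filter (fun ℓ => u ℓ = 0 ∧ v ℓ = 1) with hSdef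
  have hmuS : mu n i q ≤ S.card := by
    have hsub : {ℓ : ℕ | ∃ h : ℓ + i < n, q ⟨ℓ, by omega⟩ = (q ⟨ℓ + i, h⟩).compl}
        ⊆ ↑(S.image (Fin.val)) := by
      rintro ℓ ⟨h, hq⟩
      have hℓ : ℓ < n := by omega
      refine Finset.mem_coe.mpr (Finset.mem_image.mpr ⟨⟨ℓ, hℓ⟩, ?_, rfl⟩)
      have hadd' : (⟨ℓ, hℓ⟩ : Fin n) + iF = ⟨ℓ + i, h⟩ := by
        apply Fin.ext
        show (ℓ + i) % n = ℓ + i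
        exact Nat.mod_eq_of_lt h
      rw [hSdef, Finset.mem_filter]
      refine ⟨Finset.mem_univ _, ?_⟩
      have hbits := (base_compl_iff _ _).mp hq
      rw [hudef, hvdef]
      simp only
      rw [hadd']
      exact hbits
    calc mu n i q ≤ (S.image Fin.val).card := by
          rw [← Set.ncard_coe_finset]
          exact Set.ncard_le_ncard hsub (Finset.finite_toSet _)
      _ ≤ S.card := Finset.card_image_le
  by_cases huv : u = v
  · have hS0 : S = ∅ := by
      ext ℓ
      simp only [hSdef, Finset.mem_filter, Finset.mem_univ, true_and, Finset.notMem_empty,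
        iff_false, huv]
      rintro ⟨h0, h1⟩
      rw [h0] at h1
      exact absurd h1 (by decide)
    refine le_trans hmuS ?_
    rw [hS0]
    simp
  · have hwne : u + v ≠ 0 := by
      intro h
      apply huv
      funext ℓ
      have h1 := congrFun h ℓ
      simp only [Pi.add_apply, Pi.zero_apply] at h1
      exact (zmod2_add_eq_zero _ _).mp h1
    have hA := hwt u hu hu0
    have hB := hwt v hv hv0
    have hW := hwt (u + v) (hadd u hu v hv) hwne
    set A : Finset (Fin n) := Finset.univ.filter (fun j => u j = 1) with hAdef
    set B : Finset (Fin n) := Finset.univ.filter (fun j => v j = 1) with hBdef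
    have e1 : (A \ B).card + (A ∩ B).card = A.card := Finset.card_sdiff_add_card_inter A B
    have e2 : (B \ A).card + (B ∩ A).card = B.card := Finset.card_sdiff_add_card_inter B A
    have e3 : (A ∩ B).card = (B ∩ A).card := by rw [Finset.inter_comm]
    have e4 : Finset.univ.filter (fun j : Fin n => (u + v) j = 1) = (A \ B) ∪ (B \ A) := by
      ext ℓ
      simp only [hAdef, hBdef, Finset.mem_filter, Finset.mem_univ, true_and, Finset.mem_union,
        Finset.mem_sdiff, Pi.add_apply, zmod2_add_eq_one]
      try tauto
    have e5 : ((A \ B) ∪ (B \ A)).card = (A \ B).card + (B \ A).card :=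
      Finset.card_union_of_disjoint disjoint_sdiff_sdiff
    have e6 : S = B \ A := by
      ext ℓ
      simp only [hSdef, hAdef, hBdef, Finset.mem_filter, Finset.mem_univ, true_and,
        Finset.mem_sdiff, zmod2_eq_zero]
      try tauto
    have e7 : 2 ^ (m - 1) = 2 * 2 ^ (m - 2) := by
      have hm1 : m - 1 = (m - 2) + 1 := by omega
      rw [hm1, pow_succ]
      ring
    rw [e4, e5] at hW
    refine le_trans hmuS ?_
    rw [e6]
    omega
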